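/- Let n ≥ 1 and let ψ : [0,1]^n → ℝ be monotonic, continuous, quasiconcave, homogeneous, and translation-invariant. Then there exists a unique function ψ̃ : ℝ^n → ℝ extending ψ (i.e., ψ̃(u) = ψ(u) for all u ∈ [0,1]^n) such that ψ̃ is monotonic, continuous, quasiconcave, positively homogeneous (ψ̃(αu) = αψ̃(u) for all u ∈ ℝ^n and all α > 0), and translation-invariant (ψ̃(u + c·1) = ψ̃(u) + c for all u ∈ ℝ^n and c ∈ ℝ). -/

import Mathlib

open Set

section AuxExt

variable {n : ℕ} (ψ : (Fin n → ℝ) → ℝ)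

lemma cube_mem_iff (u : Fin n → ℝ) :
    u ∈ Icc (0 : Fin n → ℝ) 1 ↔ ∀ i, 0 ≤ u i ∧ u i ≤ 1 := by
  simp [Set.mem_Icc, Pi.le_def, forall_and]

lemma compat_le
    (hhom : ∀ u : Fin n → ℝ, u ∈ Icc (0 : Fin n → ℝ) 1 → ∀ α : ℝ, 0 < α →
      α • u ∈ Icc (0 : Fin n → ℝ) 1 → ψ (α • u) = α * ψ u)
    (hti : ∀ u : Fin n → ℝ, u ∈ Icc (0 : Fin n → ℝ) 1 → ∀ c : ℝ,
      (u + fun _ => c) ∈ Icc (0 : Fin n → ℝ) 1 → ψ (u + fun _ => c) = ψ u + c)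
    (v w : Fin n → ℝ) (hv : v ∈ Icc (0 : Fin n → ℝ) 1) (hw : w ∈ Icc (0 : Fin n → ℝ) 1)
    (β d : ℝ) (hβ : 0 < β) (hβ1 : β ≤ 1) (hwe : w = β • v + fun _ => d) :
    ψ w = β * ψ v + d := by
  have hmem : β • v ∈ Icc (0 : Fin n → ℝ) 1 := by
    rw [cube_mem_iff] at hv ⊢
    intro i
    have h1 := (hv i).1
    have h2 := (hv i).2
    constructor
    · simpa using mul_nonneg hβ.le h1
    · simp only [Pi.smul_apply, smul_eq_mul]
      nlinarith
  have h1 := hhom v hv β hβ hmem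
  have h2 := hti (β • v) hmem d (hwe ▸ hw)
  rw [hwe, h2, h1]

lemma compat
    (hhom : ∀ u : Fin n → ℝ, u ∈ Icc (0 : Fin n → ℝ) 1 → ∀ α : ℝ, 0 < α →
      α • u ∈ Icc (0 : Fin n → ℝ) 1 → ψ (α • u) = α * ψ u)
    (hti : ∀ u : Fin n → ℝ, u ∈ Icc (0 : Fin n → ℝ) 1 → ∀ c : ℝ,
      (u + fun _ => c) ∈ Icc (0 : Fin n → ℝ) 1 → ψ (u + fun _ => c) = ψ u + c)
    (v w : Fin n → ℝ) (hv : v ∈ Icc (0 : Fin n → ℝ) 1) (hw : w ∈ Icc (0 : Fin n → ℝ) 1)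
    (β d : ℝ) (hβ : 0 < β) (hwe : w = β • v + fun _ => d) :
    ψ w = β * ψ v + d := by
  rcases le_total β 1 with h1 | h1
  · exact compat_le ψ hhom hti v w hv hw β d hβ h1 hwe
  · have hβ' : 0 < β⁻¹ := inv_pos.mpr hβ
    have hβ1' : β⁻¹ ≤ 1 := by
      rw [inv_le_one_iff₀]; right; exact h1
    have hve : v = β⁻¹ • w + fun _ => -(β⁻¹ * d) := by
      funext i
      rw [hwe]
      simp only [Pi.add_apply, Pi.smul_apply, smul_eq_mul]
      field_simp
      ring
    have := compat_le ψ hhom hti w v hw hv β⁻¹ (-(β⁻¹ * d)) hβ' hβ1' hve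
    field_simp at this ⊢
    linarith

/-- Admissibility: if all coordinates of `u` are `< r + 1` in absolute value
(and `0 ≤ r`), then `(2+2r)⁻¹ • (u + (1+r)·1)` lies in the unit cube. -/
lemma adm_mem (u : Fin n → ℝ) (r : ℝ) (hr : 0 ≤ r) (h : ∀ i, |u i| < r + 1) :
    (2 + 2 * r)⁻¹ • (u + fun _ => 1 + r) ∈ Icc (0 : Fin n → ℝ) 1 := by
  have hα : (0:ℝ) < 2 + 2 * r := by linarith
  rw [cube_mem_iff]
  intro i
  have hi := abs_lt.mp (h i)
  constructor
  · simp only [Pi.smul_apply, Pi.add_apply, smul_eq_mul]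
    have : 0 ≤ u i + (1 + r) := by linarith [hi.1]
    exact mul_nonneg (inv_pos.mpr hα).le this
  · simp only [Pi.smul_apply, Pi.add_apply, smul_eq_mul]
    rw [inv_mul_le_iff₀ hα]
    linarith

end AuxExt

set_option maxHeartbeats 1000000 in
/-- Extension step at the start of the paper's proof of Theorem 1: a monotonic,
continuous, quasiconcave, homogeneous, translation-invariant function on the
unit cube extends uniquely to a function on all of `ℝ^n` with the same
properties (with homogeneity and translation invariance holding globally). -/
theorem stmt_16 {n : ℕ} (hn : 1 ≤ n) (ψ : (Fin n → ℝ) → ℝ)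
    (hmono : ∀ u v : Fin n → ℝ, u ∈ Set.Icc (0 : Fin n → ℝ) 1 →
      v ∈ Set.Icc (0 : Fin n → ℝ) 1 → (∀ i, v i < u i) → ψ v < ψ u)
    (hcont : ContinuousOn ψ (Set.Icc (0 : Fin n → ℝ) 1))
    (hqc : ∀ u v : Fin n → ℝ, u ∈ Set.Icc (0 : Fin n → ℝ) 1 →
      v ∈ Set.Icc (0 : Fin n → ℝ) 1 → ∀ α : ℝ, α ∈ Set.Icc (0 : ℝ) 1 →
      min (ψ u) (ψ v) ≤ ψ (α • u + (1 - α) • v))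
    (hhom : ∀ u : Fin n → ℝ, u ∈ Set.Icc (0 : Fin n → ℝ) 1 → ∀ α : ℝ, 0 < α →
      α • u ∈ Set.Icc (0 : Fin n → ℝ) 1 → ψ (α • u) = α * ψ u)
    (hti : ∀ u : Fin n → ℝ, u ∈ Set.Icc (0 : Fin n → ℝ) 1 → ∀ c : ℝ,
      (u + fun _ => c) ∈ Set.Icc (0 : Fin n → ℝ) 1 →
      ψ (u + fun _ => c) = ψ u + c) :
    ∃! ψt : (Fin n → ℝ) → ℝ,
      (∀ u ∈ Set.Icc (0 : Fin n → ℝ) 1, ψt u = ψ u) ∧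
      (∀ u v : Fin n → ℝ, (∀ i, v i < u i) → ψt v < ψt u) ∧
      Continuous ψt ∧
      (∀ u v : Fin n → ℝ, ∀ α : ℝ, α ∈ Set.Icc (0 : ℝ) 1 →
        min (ψt u) (ψt v) ≤ ψt (α • u + (1 - α) • v)) ∧
      (∀ u : Fin n → ℝ, ∀ α : ℝ, 0 < α → ψt (α • u) = α * ψt u) ∧
      (∀ u : Fin n → ℝ, ∀ c : ℝ, ψt (u + fun _ => c) = ψt u + c) := by
  have hnorm : ∀ (u : Fin n → ℝ) (i : Fin n), |u i| ≤ ‖u‖ := fun u i => by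
    simpa using norm_le_pi_norm u i
  have hcan : ∀ u : Fin n → ℝ,
      (2 + 2 * ‖u‖)⁻¹ • (u + fun _ => 1 + ‖u‖) ∈ Set.Icc (0 : Fin n → ℝ) 1 :=
    fun u => adm_mem u ‖u‖ (norm_nonneg u)
      (fun i => lt_of_le_of_lt (hnorm u i) (by linarith))
  have hα0 : ∀ u : Fin n → ℝ, (0:ℝ) < 2 + 2 * ‖u‖ := fun u => by
    have := norm_nonneg u; linarith
  have key : ∀ (u : Fin n → ℝ) (α c : ℝ), 0 < α →
      α⁻¹ • (u + fun _ => c) ∈ Set.Icc (0 : Fin n → ℝ) 1 →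
      (2 + 2 * ‖u‖) * ψ ((2 + 2 * ‖u‖)⁻¹ • (u + fun _ => 1 + ‖u‖)) - (1 + ‖u‖)
        = α * ψ (α⁻¹ • (u + fun _ => c)) - c := by
    intro u α c hα hmem
    have hrel : α⁻¹ • (u + fun _ => c)
        = ((2 + 2 * ‖u‖) / α) • ((2 + 2 * ‖u‖)⁻¹ • (u + fun _ => 1 + ‖u‖))
          + fun _ => (c - (1 + ‖u‖)) / α := by
      funext i
      simp only [Pi.add_apply, Pi.smul_apply, smul_eq_mul]
      have h1 := (hα0 u).ne'
      field_simp
      ring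
    have hc := compat ψ hhom hti _ _ (hcan u) hmem ((2 + 2 * ‖u‖) / α)
      ((c - (1 + ‖u‖)) / α) (div_pos (hα0 u) hα) hrel
    rw [hc]
    field_simp
    ring
  refine ⟨fun u => (2 + 2 * ‖u‖) * ψ ((2 + 2 * ‖u‖)⁻¹ • (u + fun _ => 1 + ‖u‖)) - (1 + ‖u‖),
    ⟨?_, ?_, ?_, ?_, ?_, ?_⟩, ?_⟩
  · -- extension
    intro u hu
    have h1 : (1:ℝ)⁻¹ • (u + fun _ => (0:ℝ)) = u := by
      funext i; simp
    have h2 := key u 1 0 one_pos (by rw [h1]; exact hu)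
    rw [h1] at h2
    simpa using h2
  · -- monotone
    intro u v huv
    set r : ℝ := max ‖u‖ ‖v‖ with hr
    have hr0 : (0:ℝ) ≤ r := le_trans (norm_nonneg u) (le_max_left _ _)
    have hα : (0:ℝ) < 2 + 2 * r := by linarith
    have hmu : (2 + 2 * r)⁻¹ • (u + fun _ => 1 + r) ∈ Set.Icc (0 : Fin n → ℝ) 1 :=
      adm_mem u r hr0 (fun i => lt_of_le_of_lt (hnorm u i)
        (lt_of_le_of_lt (le_max_left _ _) (by linarith)))
    have hmv : (2 + 2 * r)⁻¹ • (v + fun _ => 1 + r) ∈ Set.Icc (0 : Fin n → ℝ) 1 :=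
      adm_mem v r hr0 (fun i => lt_of_le_of_lt (hnorm v i)
        (lt_of_le_of_lt (le_max_right _ _) (by linarith)))
    have hku := key u (2 + 2 * r) (1 + r) hα hmu
    have hkv := key v (2 + 2 * r) (1 + r) hα hmv
    have hlt : ψ ((2 + 2 * r)⁻¹ • (v + fun _ => 1 + r))
        < ψ ((2 + 2 * r)⁻¹ • (u + fun _ => 1 + r)) := by
      refine hmono _ _ hmu hmv fun i => ?_
      simp only [Pi.smul_apply, Pi.add_apply, smul_eq_mul]
      have := huv i
      have hinv : (0:ℝ) < (2 + 2 * r)⁻¹ := inv_pos.mpr hα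
      nlinarith
    simp only []
    rw [hku, hkv]
    nlinarith [hlt, hα]
  · -- continuity
    rw [continuous_iff_continuousAt]
    intro u0
    set r : ℝ := ‖u0‖ with hrdef
    have hr0 : (0:ℝ) ≤ r := norm_nonneg u0
    have hα : (0:ℝ) < 2 + 2 * r := by linarith
    set U : Set (Fin n → ℝ) := {u | ‖u‖ < r + 1} with hU
    have hUopen : IsOpen U := isOpen_lt continuous_norm continuous_const
    have hU0 : u0 ∈ U := by simp only [hU, Set.mem_setOf_eq]; linarith
    have hmaps : ∀ u ∈ U, (2 + 2 * r)⁻¹ • (u + fun _ => 1 + r)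
        ∈ Set.Icc (0 : Fin n → ℝ) 1 := fun u hu =>
      adm_mem u r hr0 (fun i => lt_of_le_of_lt (hnorm u i) hu)
    have hcont2 : ContinuousOn
        (fun u : Fin n → ℝ => (2 + 2 * r) * ψ ((2 + 2 * r)⁻¹ • (u + fun _ => 1 + r)) - (1 + r)) U := by
      refine ContinuousOn.sub (ContinuousOn.mul continuousOn_const ?_) continuousOn_const
      refine ContinuousOn.comp hcont ?_ hmaps
      exact Continuous.continuousOn
        (by fun_prop)
    have heq : Set.EqOn
        (fun u : Fin n → ℝ => (2 + 2 * ‖u‖) * ψ ((2 + 2 * ‖u‖)⁻¹ • (u + fun _ => 1 + ‖u‖)) - (1 + ‖u‖))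
        (fun u : Fin n → ℝ => (2 + 2 * r) * ψ ((2 + 2 * r)⁻¹ • (u + fun _ => 1 + r)) - (1 + r)) U := by
      intro u hu
      exact key u (2 + 2 * r) (1 + r) hα (hmaps u hu)
    exact (hcont2.congr heq).continuousAt (hUopen.mem_nhds hU0)
  · -- quasiconcavity
    intro u v a ha
    obtain ⟨ha0, ha1⟩ := ha
    set r : ℝ := max ‖u‖ ‖v‖ with hr
    have hru : ‖u‖ ≤ r := le_max_left _ _
    have hrv : ‖v‖ ≤ r := le_max_right _ _
    have hr0 : (0:ℝ) ≤ r := le_trans (norm_nonneg u) hru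
    have hα : (0:ℝ) < 2 + 2 * r := by linarith
    have hmu : (2 + 2 * r)⁻¹ • (u + fun _ => 1 + r) ∈ Set.Icc (0 : Fin n → ℝ) 1 :=
      adm_mem u r hr0 (fun i => lt_of_le_of_lt (hnorm u i) (by linarith))
    have hmv : (2 + 2 * r)⁻¹ • (v + fun _ => 1 + r) ∈ Set.Icc (0 : Fin n → ℝ) 1 :=
      adm_mem v r hr0 (fun i => lt_of_le_of_lt (hnorm v i) (by linarith))
    have hwi : ∀ i, |(a • u + (1 - a) • v) i| < r + 1 := by
      intro i
      have h1 : |u i| ≤ r := le_trans (hnorm u i) hru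
      have h2 : |v i| ≤ r := le_trans (hnorm v i) hrv
      have h3 := abs_add_le (a * u i) ((1 - a) * v i)
      have h4 : |a * u i| ≤ a * r := by
        rw [abs_mul, abs_of_nonneg ha0]
        exact mul_le_mul_of_nonneg_left h1 ha0
      have h5 : |(1 - a) * v i| ≤ (1 - a) * r := by
        rw [abs_mul, abs_of_nonneg (by linarith : (0:ℝ) ≤ 1 - a)]
        exact mul_le_mul_of_nonneg_left h2 (by linarith)
      simp only [Pi.add_apply, Pi.smul_apply, smul_eq_mul]
      nlinarith
    have hmw : (2 + 2 * r)⁻¹ • ((a • u + (1 - a) • v) + fun _ => 1 + r)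
        ∈ Set.Icc (0 : Fin n → ℝ) 1 := adm_mem _ r hr0 hwi
    have hcomb : (2 + 2 * r)⁻¹ • ((a • u + (1 - a) • v) + fun _ => 1 + r)
        = a • ((2 + 2 * r)⁻¹ • (u + fun _ => 1 + r))
          + (1 - a) • ((2 + 2 * r)⁻¹ • (v + fun _ => 1 + r)) := by
      funext i
      simp only [Pi.add_apply, Pi.smul_apply, smul_eq_mul]
      field_simp
      ring
    have hku := key u (2 + 2 * r) (1 + r) hα hmu
    have hkv := key v (2 + 2 * r) (1 + r) hα hmv
    have hkw := key (a • u + (1 - a) • v) (2 + 2 * r) (1 + r) hα hmw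
    have hq := hqc _ _ hmu hmv a ⟨ha0, ha1⟩
    rw [← hcomb] at hq
    simp only []
    rw [hku, hkv, hkw]
    rcases le_total (ψ ((2 + 2 * r)⁻¹ • (u + fun _ => 1 + r)))
        (ψ ((2 + 2 * r)⁻¹ • (v + fun _ => 1 + r))) with h | h
    · rw [min_eq_left (by nlinarith)]
      rw [min_eq_left h] at hq
      nlinarith
    · rw [min_eq_right (by nlinarith)]
      rw [min_eq_right h] at hq
      nlinarith
  · -- homogeneity
    intro u a ha
    have hα := hα0 u
    have h1 : (a * (2 + 2 * ‖u‖))⁻¹ • (a • u + fun _ => a * (1 + ‖u‖))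
        = (2 + 2 * ‖u‖)⁻¹ • (u + fun _ => 1 + ‖u‖) := by
      funext i
      simp only [Pi.add_apply, Pi.smul_apply, smul_eq_mul]
      field_simp
    have h2 := key (a • u) (a * (2 + 2 * ‖u‖)) (a * (1 + ‖u‖))
      (mul_pos ha hα) (by rw [h1]; exact hcan u)
    simp only []
    rw [h2, h1]
    ring
  · -- translation invariance
    intro u c
    have hα := hα0 u
    have h1 : (2 + 2 * ‖u‖)⁻¹ • ((u + fun _ => c) + fun _ => (1 + ‖u‖) - c)
        = (2 + 2 * ‖u‖)⁻¹ • (u + fun _ => 1 + ‖u‖) := by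
      funext i
      simp only [Pi.add_apply, Pi.smul_apply, smul_eq_mul]
      ring
    have h2 := key (u + fun _ => c) (2 + 2 * ‖u‖) ((1 + ‖u‖) - c) hα
      (by rw [h1]; exact hcan u)
    simp only []
    rw [h2, h1]
    ring
  · -- uniqueness
    rintro φ ⟨hext, -, -, -, hph, hpt⟩
    funext u
    have hα := hα0 u
    have h0 := hcan u
    have huq : u = (2 + 2 * ‖u‖) • ((2 + 2 * ‖u‖)⁻¹ • (u + fun _ => 1 + ‖u‖))
        + fun _ => -(1 + ‖u‖) := by
      funext i
      simp only [Pi.add_apply, Pi.smul_apply, smul_eq_mul]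
      field_simp
      ring
    have hk := key u (2 + 2 * ‖u‖) (1 + ‖u‖) hα h0
    calc φ u = φ ((2 + 2 * ‖u‖) • ((2 + 2 * ‖u‖)⁻¹ • (u + fun _ => 1 + ‖u‖))
          + fun _ => -(1 + ‖u‖)) := by rw [← huq]
      _ = φ ((2 + 2 * ‖u‖) • ((2 + 2 * ‖u‖)⁻¹ • (u + fun _ => 1 + ‖u‖))) + -(1 + ‖u‖) :=
          hpt _ _
      _ = (2 + 2 * ‖u‖) * ψ ((2 + 2 * ‖u‖)⁻¹ • (u + fun _ => 1 + ‖u‖)) - (1 + ‖u‖) := by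
          rw [hph _ _ hα, hext _ h0]; ring
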